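/- arXiv:1906.02702 — 5 statements merged into one kernel-verified Lean document; each statement's English description precedes it below -/
import Mathlib

section
/- For any integers a, k with 1 < a < k and any real γ with 1 < γ ≤ a/2, the product ∏_{t=a}^{k-1} (1 - γ/t) satisfies a^{2γ}/k^{2γ} ≤ ∏_{t=a}^{k-1} (1 - γ/t) ≤ a^γ/k^γ. -/
open Finset

private lemma tele1 (a : ℕ) (ha : 0 < a) : ∀ k, a ≤ k →
    ∏ t ∈ Finset.Ico a k, (t : ℝ) / (t + 1) = a / k := by
  intro k hk
  induction k, hk using Nat.le_induction with
  | base => simp [div_self (by positivity : ((a:ℝ)) ≠ 0)]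
  | succ k hk ih =>
    rw [Finset.prod_Ico_succ_top hk, ih]
    have hk0 : (0:ℝ) < k := by
      have : 0 < k := lt_of_lt_of_le ha hk
      exact_mod_cast this
    push_cast
    field_simp

private lemma tele2 (a : ℕ) (ha : 1 < a) : ∀ k, a ≤ k →
    ∏ t ∈ Finset.Ico a k, ((t : ℝ) - 1) / t = ((a : ℝ) - 1) / ((k : ℝ) - 1) := by
  intro k hk
  induction k, hk using Nat.le_induction with
  | base =>
    have h : (a:ℝ) - 1 ≠ 0 := by
      have : (1:ℝ) < a := by exact_mod_cast ha
      linarith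
    simp [div_self h]
  | succ k hk ih =>
    rw [Finset.prod_Ico_succ_top hk, ih]
    have hk1 : (1:ℝ) < k := by exact_mod_cast lt_of_lt_of_le ha hk
    have h1 : (k:ℝ) - 1 ≠ 0 := by linarith
    have h2 : (k:ℝ) ≠ 0 := by linarith
    push_cast
    field_simp
    rw [add_sub_cancel_right, mul_div_assoc, div_self h2, mul_one]

theorem stmt0 (a k : ℕ) (γ : ℝ) (ha : 1 < a) (hk : a < k)
    (hγ1 : 1 < γ) (hγ2 : γ ≤ (a : ℝ) / 2) :
    (a : ℝ) ^ (2 * γ) / (k : ℝ) ^ (2 * γ) ≤ ∏ t ∈ Finset.Ico a k, (1 - γ / (t : ℝ)) ∧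
    ∏ t ∈ Finset.Ico a k, (1 - γ / (t : ℝ)) ≤ (a : ℝ) ^ γ / (k : ℝ) ^ γ := by
  have ha0 : (0:ℝ) < a := by exact_mod_cast Nat.zero_lt_of_lt ha
  have hk0 : (0:ℝ) < k := by exact_mod_cast Nat.zero_lt_of_lt (lt_trans ha hk)
  have hak : (a:ℝ) < k := by exact_mod_cast hk
  have ht2γ : ∀ t ∈ Finset.Ico a k, 2 * γ ≤ (t:ℝ) := by
    intro t ht
    have h := (Finset.mem_Ico.mp ht).1
    have : (a:ℝ) ≤ t := by exact_mod_cast h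
    linarith
  have htpos : ∀ t ∈ Finset.Ico a k, (0:ℝ) < t := by
    intro t ht
    have h := ht2γ t ht
    linarith
  have hfacnn : ∀ t ∈ Finset.Ico a k, (0:ℝ) ≤ 1 - γ / t := by
    intro t ht
    have hx := ht2γ t ht
    have hx0 := htpos t ht
    have : γ / (t:ℝ) ≤ 1 := by
      rw [div_le_one hx0]; linarith
    linarith
  constructor
  · -- lower bound
    have key : ∀ t ∈ Finset.Ico a k, ((t:ℝ) / (t + 1)) ^ (2*γ) ≤ 1 - γ / t := by
      intro t ht
      have hx : 2 * γ ≤ (t:ℝ) := ht2γ t ht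
      have hx0 : (0:ℝ) < t := htpos t ht
      have hγ0 : (0:ℝ) < γ := by linarith
      have hxγ : γ < (t:ℝ) := by linarith
      have hb := one_add_mul_self_le_rpow_one_add (s := 1 / (t:ℝ))
        (by have : (0:ℝ) ≤ 1/t := by positivity
            linarith) (p := 2*γ) (by linarith)
      have h1 : (t:ℝ) / (t - γ) ≤ 1 + 2*γ * (1/t) := by
        rw [div_le_iff₀ (by linarith : (0:ℝ) < t - γ)]
        have e : (1 + 2*γ*(1/(t:ℝ))) * (t-γ) = t + (γ*(t-2*γ))/t := by
          field_simp; ring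
        rw [e]
        have h0 : 0 ≤ (γ*((t:ℝ)-2*γ))/t :=
          div_nonneg (mul_nonneg (by linarith) (by linarith)) hx0.le
        linarith
      have h2 : (t:ℝ) / (t - γ) ≤ (1 + 1/t) ^ (2*γ) := le_trans h1 hb
      have hpos1 : (0:ℝ) < (t:ℝ)/(t-γ) := by
        apply div_pos hx0; linarith
      have h3 : ((1 + 1/(t:ℝ)) ^ (2*γ))⁻¹ ≤ ((t:ℝ)/(t-γ))⁻¹ :=
        inv_anti₀ hpos1 h2
      have he : (1 + 1/(t:ℝ)) = (t+1)/t := by field_simp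
      have he2 : ((t:ℝ)/(t+1)) = (1 + 1/(t:ℝ))⁻¹ := by
        rw [he, inv_div]
      rw [he2, Real.inv_rpow (by positivity : (0:ℝ) ≤ 1 + 1/(t:ℝ))]
      calc ((1 + 1/(t:ℝ)) ^ (2*γ))⁻¹ ≤ ((t:ℝ)/(t-γ))⁻¹ := h3
        _ = 1 - γ/t := by rw [inv_div]; field_simp
    calc (a : ℝ) ^ (2 * γ) / (k : ℝ) ^ (2 * γ)
        = ((a:ℝ)/k) ^ (2*γ) := (Real.div_rpow ha0.le hk0.le _).symm
      _ = (∏ t ∈ Finset.Ico a k, (t : ℝ) / (t + 1)) ^ (2*γ) := by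
          rw [tele1 a (by omega) k hk.le]
      _ = ∏ t ∈ Finset.Ico a k, ((t : ℝ) / (t + 1)) ^ (2*γ) := by
          rw [Real.finset_prod_rpow _ _ (fun t ht => by positivity)]
      _ ≤ ∏ t ∈ Finset.Ico a k, (1 - γ / (t:ℝ)) := by
          apply Finset.prod_le_prod (fun t ht => Real.rpow_nonneg (by positivity) _) key
  · -- upper bound
    have key2 : ∀ t ∈ Finset.Ico a k, 1 - γ / (t:ℝ) ≤ (((t:ℝ) - 1)/t) ^ γ := by
      intro t ht
      have hx0 : (0:ℝ) < t := htpos t ht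
      have hb := one_add_mul_self_le_rpow_one_add (s := -(1 / (t:ℝ)))
        (by
          have : 1/(t:ℝ) ≤ 1 := by
            rw [div_le_one hx0]
            have := ht2γ t ht; linarith
          linarith) (p := γ) hγ1.le
      have e1 : 1 + γ * -(1/(t:ℝ)) = 1 - γ/t := by ring
      have e2 : 1 + -(1/(t:ℝ)) = ((t:ℝ)-1)/t := by field_simp; ring
      rw [e1, e2] at hb
      exact hb
    have hk1 : (1:ℝ) < k := by linarith [show (1:ℝ) < a by exact_mod_cast ha]
    calc ∏ t ∈ Finset.Ico a k, (1 - γ / (t:ℝ))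
        ≤ ∏ t ∈ Finset.Ico a k, (((t:ℝ) - 1)/t) ^ γ :=
          Finset.prod_le_prod hfacnn key2
      _ = (∏ t ∈ Finset.Ico a k, ((t:ℝ) - 1)/t) ^ γ := by
          rw [Real.finset_prod_rpow _ _ (fun t ht => by
            have := ht2γ t ht
            have := htpos t ht
            apply div_nonneg (by linarith) (by linarith))]
      _ = (((a:ℝ)-1)/((k:ℝ)-1)) ^ γ := by rw [tele2 a ha k hk.le]
      _ ≤ ((a:ℝ)/k) ^ γ := by
          apply Real.rpow_le_rpow
          · apply div_nonneg
            · have : (1:ℝ) < a := by exact_mod_cast ha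
              linarith
            · linarith
          · rw [div_le_div_iff₀ (by linarith) hk0]
            nlinarith
          · linarith
      _ = (a : ℝ) ^ γ / (k : ℝ) ^ γ := Real.div_rpow ha0.le hk0.le _
end

section
/- Let g_1, ..., g_n be independent random vectors in ℝ^p with E[g_i] = ∇f_i(x_i) and E[‖g_i - ∇f_i(x_i)‖²] ≤ σ² + M‖∇f_i(x_i)‖², where each f_i has L-Lipschitz gradient. Let x_* be any point. Then E[‖(1/n)∑_i g_i - (1/n)∑_i ∇f_i(x_i)‖²] ≤ (2ML²/n²)∑_i ‖x_i - x_*‖² + (1/n)(2M(1/n)∑_i ‖∇f_i(x_*)‖² + σ²). -/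
open MeasureTheory ProbabilityTheory
open scoped RealInnerProductSpace

section aux
variable {Ω : Type*} [MeasureSpace Ω] [IsProbabilityMeasure (ℙ : Measure Ω)]

lemma aux_int_mul {A B : Ω → ℝ} (hA : MemLp A 2 ℙ) (hB : MemLp B 2 ℙ) :
    Integrable (fun ω => A ω * B ω) ℙ := by
  refine (hA.integrable_sq.add hB.integrable_sq).mono' (hA.1.mul hB.1) ?_
  filter_upwards with ω
  simp only [Pi.add_apply]
  rw [Real.norm_eq_abs, abs_mul]
  nlinarith [abs_nonneg (A ω), abs_nonneg (B ω), sq_abs (A ω), sq_abs (B ω),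
    sq_nonneg (|A ω| - |B ω|)]

lemma aux_int_inner {E : Type*} [NormedAddCommGroup E] [InnerProductSpace ℝ E]
    {f g : Ω → E} (hf : MemLp f 2 ℙ) (hg : MemLp g 2 ℙ) :
    Integrable (fun ω => ⟪f ω, g ω⟫) ℙ := by
  have h1 : Integrable (fun ω => ‖f ω‖ ^ 2) ℙ := (memLp_two_iff_integrable_sq_norm hf.1).1 hf
  have h2 : Integrable (fun ω => ‖g ω‖ ^ 2) ℙ := (memLp_two_iff_integrable_sq_norm hg.1).1 hg
  refine (h1.add h2).mono' (hf.1.inner hg.1) ?_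
  filter_upwards with ω
  have h := abs_real_inner_le_norm (f ω) (g ω)
  simp only [Pi.add_apply]
  rw [Real.norm_eq_abs]
  nlinarith [norm_nonneg (f ω), norm_nonneg (g ω), sq_nonneg (‖f ω‖ - ‖g ω‖)]

lemma aux_sum_sq {p n : ℕ} (Y : Fin n → Ω → EuclideanSpace ℝ (Fin p))
    (hL2 : ∀ i, MemLp (Y i) 2 ℙ)
    (hzero : ∀ i, (∫ ω, Y i ω ∂ℙ) = 0)
    (hind : ∀ i j, i ≠ j → IndepFun (Y i) (Y j) ℙ) :
    (∫ ω, ‖∑ i, Y i ω‖ ^ 2 ∂ℙ) = ∑ i, ∫ ω, ‖Y i ω‖ ^ 2 ∂ℙ := by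
  have hii : ∀ i j : Fin n, Integrable (fun ω => ⟪Y i ω, Y j ω⟫) ℙ :=
    fun i j => aux_int_inner (hL2 i) (hL2 j)
  have hcoord : ∀ (i : Fin n) (k : Fin p), MemLp (fun ω => Y i ω k) 2 ℙ := by
    intro i k
    exact (EuclideanSpace.proj k : EuclideanSpace ℝ (Fin p) →L[ℝ] ℝ).comp_memLp' (hL2 i)
  have hczero : ∀ (i : Fin n) (k : Fin p), (∫ ω, Y i ω k ∂ℙ) = 0 := by
    intro i k
    have := (EuclideanSpace.proj k : EuclideanSpace ℝ (Fin p) →L[ℝ] ℝ).integral_comp_comm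
      ((hL2 i).integrable one_le_two)
    simpa [hzero i, Function.comp] using this
  have hoff : ∀ i j : Fin n, i ≠ j → (∫ ω, ⟪Y i ω, Y j ω⟫ ∂ℙ) = 0 := by
    intro i j hij
    have h1 : (∫ ω, ⟪Y i ω, Y j ω⟫ ∂ℙ) = ∫ ω, ∑ k, Y i ω k * Y j ω k ∂ℙ := by
      refine integral_congr_ae (Filter.Eventually.of_forall fun ω => ?_)
      simp [PiLp.inner_apply, RCLike.inner_apply, conj_trivial, mul_comm]
    rw [h1, integral_finset_sum _ (fun k _ => aux_int_mul (hcoord i k) (hcoord j k))]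
    refine Finset.sum_eq_zero fun k _ => ?_
    have hindk : IndepFun (fun ω => Y i ω k) (fun ω => Y j ω k) ℙ :=
      (hind i j hij).comp (EuclideanSpace.proj k : EuclideanSpace ℝ (Fin p) →L[ℝ] ℝ).continuous.measurable
        (EuclideanSpace.proj k : EuclideanSpace ℝ (Fin p) →L[ℝ] ℝ).continuous.measurable
    rw [hindk.integral_fun_mul_eq_mul_integral ((hcoord i k).1) ((hcoord j k).1), hczero i k, zero_mul]
  calc (∫ ω, ‖∑ i, Y i ω‖ ^ 2 ∂ℙ) = ∫ ω, ∑ i, ∑ j, ⟪Y i ω, Y j ω⟫ ∂ℙ := by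
        congr 1; ext ω
        rw [← real_inner_self_eq_norm_sq, sum_inner]
        exact Finset.sum_congr rfl fun i _ => inner_sum _ _ _
    _ = ∑ i, ∑ j, ∫ ω, ⟪Y i ω, Y j ω⟫ ∂ℙ := by
        rw [integral_finset_sum _ (fun i _ => integrable_finset_sum _ (fun j _ => hii i j))]
        exact Finset.sum_congr rfl fun i _ => integral_finset_sum _ (fun j _ => hii i j)
    _ = ∑ i, ∫ ω, ⟪Y i ω, Y i ω⟫ ∂ℙ := by
        refine Finset.sum_congr rfl fun i _ => ?_
        rw [Finset.sum_eq_single i (fun j _ hj => hoff i j (Ne.symm hj)) (by simp)]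
    _ = ∑ i, ∫ ω, ‖Y i ω‖ ^ 2 ∂ℙ := by
        refine Finset.sum_congr rfl fun i _ => ?_
        exact integral_congr_ae (Filter.Eventually.of_forall fun ω => real_inner_self_eq_norm_sq _)

end aux

theorem stmt4 {p n : ℕ} (hn : 0 < n)
    {Ω : Type*} [MeasureSpace Ω] [IsProbabilityMeasure (ℙ : Measure Ω)]
    (g : Fin n → Ω → EuclideanSpace ℝ (Fin p))
    (f : Fin n → EuclideanSpace ℝ (Fin p) → ℝ)
    (grad : Fin n → EuclideanSpace ℝ (Fin p) → EuclideanSpace ℝ (Fin p))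
    (L σ M : ℝ) (hσ : 0 < σ) (hM : 0 < M)
    (hgrad : ∀ i x, HasGradientAt (f i) (grad i x) x)
    (hlip : ∀ i x y, ‖grad i x - grad i y‖ ≤ L * ‖x - y‖)
    (x : Fin n → EuclideanSpace ℝ (Fin p)) (xs : EuclideanSpace ℝ (Fin p))
    (hindep : iIndepFun g ℙ)
    (hint : ∀ i, Integrable (g i) ℙ)
    (hint2 : ∀ i, Integrable (fun ω => ‖g i ω - grad i (x i)‖ ^ 2) ℙ)
    (hmean : ∀ i, (∫ ω, g i ω ∂ℙ) = grad i (x i))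
    (hvar : ∀ i, (∫ ω, ‖g i ω - grad i (x i)‖ ^ 2 ∂ℙ) ≤ σ ^ 2 + M * ‖grad i (x i)‖ ^ 2) :
    (∫ ω, ‖(n : ℝ)⁻¹ • ∑ i, g i ω - (n : ℝ)⁻¹ • ∑ i, grad i (x i)‖ ^ 2 ∂ℙ) ≤
      2 * M * L ^ 2 / (n : ℝ) ^ 2 * ∑ i, ‖x i - xs‖ ^ 2 +
      (1 / (n : ℝ)) * (2 * M * ((n : ℝ)⁻¹ * ∑ i, ‖grad i xs‖ ^ 2) + σ ^ 2) := by
  set Y : Fin n → Ω → EuclideanSpace ℝ (Fin p) := fun i ω => g i ω - grad i (x i) with hYdef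
  have hmeas : ∀ i, AEStronglyMeasurable (Y i) ℙ :=
    fun i => ((hint i).1).sub aestronglyMeasurable_const
  have hL2 : ∀ i, MemLp (Y i) 2 ℙ :=
    fun i => (memLp_two_iff_integrable_sq_norm (hmeas i)).2 (hint2 i)
  have hY0 : ∀ i, (∫ ω, Y i ω ∂ℙ) = 0 := by
    intro i
    simp only [hYdef]
    rw [integral_sub (hint i) (integrable_const _), hmean i, integral_const]
    simp
  have hind : ∀ i j, i ≠ j → IndepFun (Y i) (Y j) ℙ := by
    intro i j hij
    exact (hindep.indepFun hij).comp
      (measurable_id.sub measurable_const) (measurable_id.sub measurable_const)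
  have key := aux_sum_sq Y hL2 hY0 hind
  -- rewrite LHS
  have hre : (∫ ω, ‖(n : ℝ)⁻¹ • ∑ i, g i ω - (n : ℝ)⁻¹ • ∑ i, grad i (x i)‖ ^ 2 ∂ℙ)
      = ((n : ℝ)⁻¹) ^ 2 * ∫ ω, ‖∑ i, Y i ω‖ ^ 2 ∂ℙ := by
    rw [← integral_const_mul]
    refine integral_congr_ae (Filter.Eventually.of_forall fun ω => ?_)
    simp only
    rw [← smul_sub, norm_smul, mul_pow]
    congr 2
    · rw [Real.norm_eq_abs, abs_of_nonneg (by positivity : (0:ℝ) ≤ (n:ℝ)⁻¹)]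
    · congr 1
      simp [hYdef, Finset.sum_sub_distrib]
  rw [hre, key]
  have hb : ∀ i : Fin n, (∫ ω, ‖Y i ω‖ ^ 2 ∂ℙ) ≤
      σ ^ 2 + 2 * M * L ^ 2 * ‖x i - xs‖ ^ 2 + 2 * M * ‖grad i xs‖ ^ 2 := by
    intro i
    refine (hvar i).trans ?_
    have h1 := hlip i (x i) xs
    have h2 : ‖grad i (x i)‖ ≤ ‖grad i (x i) - grad i xs‖ + ‖grad i xs‖ := by
      calc ‖grad i (x i)‖ = ‖(grad i (x i) - grad i xs) + grad i xs‖ := by rw [sub_add_cancel]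
        _ ≤ _ := norm_add_le _ _
    have h3 : ‖grad i (x i)‖ ^ 2 ≤ (‖grad i (x i) - grad i xs‖ + ‖grad i xs‖) ^ 2 :=
      pow_le_pow_left₀ (norm_nonneg _) h2 2
    have h4 : ‖grad i (x i) - grad i xs‖ ^ 2 ≤ (L * ‖x i - xs‖) ^ 2 :=
      pow_le_pow_left₀ (norm_nonneg _) h1 2
    have h5 : (‖grad i (x i) - grad i xs‖ + ‖grad i xs‖) ^ 2 ≤
        2 * ‖grad i (x i) - grad i xs‖ ^ 2 + 2 * ‖grad i xs‖ ^ 2 := by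
      nlinarith [sq_nonneg (‖grad i (x i) - grad i xs‖ - ‖grad i xs‖)]
    have h6 : ‖grad i (x i)‖ ^ 2 ≤ 2 * L ^ 2 * ‖x i - xs‖ ^ 2 + 2 * ‖grad i xs‖ ^ 2 := by
      nlinarith
    nlinarith [hM.le, h6]
  have hsum : (∑ i, ∫ ω, ‖Y i ω‖ ^ 2 ∂ℙ) ≤
      (n : ℝ) * σ ^ 2 + 2 * M * L ^ 2 * ∑ i, ‖x i - xs‖ ^ 2 + 2 * M * ∑ i, ‖grad i xs‖ ^ 2 := by
    calc (∑ i, ∫ ω, ‖Y i ω‖ ^ 2 ∂ℙ)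
        ≤ ∑ i : Fin n, (σ ^ 2 + 2 * M * L ^ 2 * ‖x i - xs‖ ^ 2 + 2 * M * ‖grad i xs‖ ^ 2) :=
          Finset.sum_le_sum fun i _ => hb i
      _ = _ := by
          rw [Finset.sum_add_distrib, Finset.sum_add_distrib, ← Finset.mul_sum, ← Finset.mul_sum]
          simp [mul_comm]
  have hnpos : (0:ℝ) < n := Nat.cast_pos.2 hn
  have hfac : (0:ℝ) ≤ ((n : ℝ)⁻¹) ^ 2 := by positivity
  calc ((n : ℝ)⁻¹) ^ 2 * ∑ i, ∫ ω, ‖Y i ω‖ ^ 2 ∂ℙ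
      ≤ ((n : ℝ)⁻¹) ^ 2 * ((n : ℝ) * σ ^ 2 + 2 * M * L ^ 2 * ∑ i, ‖x i - xs‖ ^ 2
          + 2 * M * ∑ i, ‖grad i xs‖ ^ 2) := mul_le_mul_of_nonneg_left hsum hfac
    _ = 2 * M * L ^ 2 / (n : ℝ) ^ 2 * ∑ i, ‖x i - xs‖ ^ 2 +
        (1 / (n : ℝ)) * (2 * M * ((n : ℝ)⁻¹ * ∑ i, ‖grad i xs‖ ^ 2) + σ ^ 2) := by
        field_simp
        ring
end

section
/- Let θ > 2 and let a ≥ 4θ be an integer. Then for all integers b with b > a, ∑_{t=a}^{b} (t+1)^{1.5θ}/t² ≤ b^{1.5θ-1}/(1.5θ - 1) + 3b^{1.5θ-2}/(1.5θ - 2) + 3b^{1.5θ-2}. -/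
open Finset Real

/-- Sum of `t^c` over `Icc a b` is at most `b^c + b^(c+1)/(c+1)`. -/
lemma aux_sum_rpow_le (c : ℝ) (hc : 0 ≤ c) (a : ℕ) (ha : 1 ≤ a) :
    ∀ b : ℕ, a ≤ b → ∑ t ∈ Finset.Icc a b, (t : ℝ) ^ c ≤
      (b : ℝ) ^ c + (b : ℝ) ^ (c + 1) / (c + 1) := by
  intro b hb
  induction b, hb using Nat.le_induction with
  | base =>
      rw [Finset.Icc_self, Finset.sum_singleton]
      have : (0 : ℝ) < (a : ℝ) ^ (c + 1) / (c + 1) := by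
        apply div_pos
        · apply Real.rpow_pos_of_pos
          exact_mod_cast ha
        · linarith
      linarith
  | succ b hab ih =>
      have hb0 : (0 : ℝ) < b := by
        have : 1 ≤ b := le_trans ha hab
        exact_mod_cast this
      rw [Finset.sum_Icc_succ_top (by omega)]
      have key : (c + 1) * (b : ℝ) ^ c + (b : ℝ) ^ (c + 1) ≤ ((b : ℝ) + 1) ^ (c + 1) := by
        have hbinv : (0 : ℝ) < 1 / (b : ℝ) := by positivity
        have hbern := one_add_mul_self_le_rpow_one_add
          (s := 1 / (b : ℝ)) (by linarith) (p := c + 1) (by linarith)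
        have h1 : ((b : ℝ) + 1) ^ (c + 1) = (b : ℝ) ^ (c + 1) * (1 + 1 / (b : ℝ)) ^ (c + 1) := by
          rw [← Real.mul_rpow (by positivity) (by positivity)]
          congr 1
          field_simp
        have h2 : (b : ℝ) ^ (c + 1) * (1 + (c + 1) * (1 / b)) ≤
            (b : ℝ) ^ (c + 1) * (1 + 1 / (b : ℝ)) ^ (c + 1) :=
          mul_le_mul_of_nonneg_left hbern (by positivity)
        have h4 : (b : ℝ) ^ (c + 1) = (b : ℝ) ^ c * b := Real.rpow_add_one hb0.ne' c
        rw [h4] at h2 ⊢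
        rw [h1, h4]
        calc (c + 1) * (b : ℝ) ^ c + (b : ℝ) ^ c * b
            = (b : ℝ) ^ c * b * (1 + (c + 1) * (1 / b)) := by field_simp; ring
          _ ≤ _ := h2
      have hc1 : (0 : ℝ) < c + 1 := by linarith
      have hstep : (b : ℝ) ^ c + (b : ℝ) ^ (c + 1) / (c + 1) ≤ ((b : ℝ) + 1) ^ (c + 1) / (c + 1) := by
        rw [le_div_iff₀ hc1]
        have hd : (b : ℝ) ^ (c + 1) / (c + 1) * (c + 1) = (b : ℝ) ^ (c + 1) := by
          field_simp
        nlinarith [key]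
      push_cast
      linarith [ih]

/-- Pointwise term bound. -/
lemma aux_term_le (s : ℝ) (hs : 3 < s) (t : ℕ) (ht : (8 / 3) * s ≤ (t : ℝ)) :
    ((t : ℝ) + 1) ^ s / (t : ℝ) ^ 2 ≤ (t : ℝ) ^ (s - 2) + (11 / 8) * s * (t : ℝ) ^ (s - 3) := by
  have ht0 : (0 : ℝ) < t := by nlinarith
  have htne : (t : ℝ) ≠ 0 := ht0.ne'
  have hx0 : (0 : ℝ) < s / t := by positivity
  have hx38 : s / (t : ℝ) ≤ 3 / 8 := by
    rw [div_le_iff₀ ht0]; nlinarith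
  have hlog : Real.log (1 + 1 / (t : ℝ)) ≤ 1 / t := by
    have := Real.log_le_sub_one_of_pos (x := 1 + 1 / (t : ℝ)) (by positivity)
    linarith
  have hexp1 : (1 + 1 / (t : ℝ)) ^ s ≤ Real.exp (s / t) := by
    rw [Real.rpow_def_of_pos (by positivity)]
    apply Real.exp_le_exp.2
    calc Real.log (1 + 1 / (t : ℝ)) * s ≤ (1 / t) * s := by
          apply mul_le_mul_of_nonneg_right hlog (by linarith)
      _ = s / t := by ring
  have hexp2 : Real.exp (s / t) ≤ 1 + (11 / 8) * (s / t) := by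
    have hb := Real.exp_bound' hx0.le (by linarith) (n := 2) (by norm_num)
    have hsum : (∑ m ∈ Finset.range 2, (s / t) ^ m / m.factorial) = 1 + s / t := by
      simp [Finset.sum_range_succ, Nat.factorial]
    rw [hsum] at hb
    have hq : (s / t) ^ 2 * ((2 : ℕ) + 1) / ((2 : ℕ).factorial * 2) ≤ (3 / 8) * (s / t) := by
      have hsq : (s / t) ^ 2 ≤ (3 / 8) * (s / t) := by nlinarith
      norm_num [Nat.factorial]
      nlinarith
    push_cast at hb hq
    linarith
  have hmain : ((t : ℝ) + 1) ^ s ≤ (t : ℝ) ^ s * (1 + (11 / 8) * (s / t)) := by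
    have h1 : ((t : ℝ) + 1) ^ s = (t : ℝ) ^ s * (1 + 1 / (t : ℝ)) ^ s := by
      rw [← Real.mul_rpow ht0.le (by positivity)]
      congr 1
      field_simp
    rw [h1]
    exact mul_le_mul_of_nonneg_left (le_trans hexp1 hexp2) (by positivity)
  have e1 : (t : ℝ) ^ s = (t : ℝ) ^ (s - 3) * t ^ 3 := by
    rw [← Real.rpow_natCast (t : ℝ) 3, ← Real.rpow_add ht0]
    norm_num
  have e2 : (t : ℝ) ^ (s - 2) = (t : ℝ) ^ (s - 3) * t := by
    rw [show s - 2 = s - 3 + 1 by ring, Real.rpow_add_one htne]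
  have ht2 : (0 : ℝ) < (t : ℝ) ^ 2 := by positivity
  rw [div_le_iff₀ ht2]
  have hst : (1 + 11 / 8 * (s / (t : ℝ))) * (t : ℝ) = t + 11 / 8 * s := by
    field_simp
  calc ((t : ℝ) + 1) ^ s ≤ (t : ℝ) ^ s * (1 + (11 / 8) * (s / t)) := hmain
    _ = (t : ℝ) ^ (s - 3) * ((1 + 11 / 8 * (s / (t : ℝ))) * (t : ℝ)) * (t : ℝ) ^ 2 := by
        rw [e1]; ring
    _ = (t : ℝ) ^ (s - 3) * ((t : ℝ) + 11 / 8 * s) * (t : ℝ) ^ 2 := by rw [hst]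
    _ = ((t : ℝ) ^ (s - 2) + 11 / 8 * s * (t : ℝ) ^ (s - 3)) * (t : ℝ) ^ 2 := by
        rw [e2]; ring


/-- Final arithmetic step. -/
lemma aux_final (s B b' : ℝ) (hs : 3 < s) (hB : 0 < B) (hb' : 0 < b')
    (hsb : s / b' ≤ 3 / 8) :
    B + (11 / 8) * s * (B / b' + B / (s - 2)) ≤ 3 * B / (s - 2) + 3 * B := by
  have hs2' : (0 : ℝ) < s - 2 := by linarith
  have h1 : (11 / 8) * s * (B / b') ≤ (33 / 64) * B := by
    have h0 : s / b' * B ≤ 3 / 8 * B := mul_le_mul_of_nonneg_right hsb hB.le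
    have hrw1 : (11 / 8) * s * (B / b') = (11 / 8) * (s / b' * B) := by ring
    rw [hrw1]; nlinarith
  have hrw : 3 * B / (s - 2) = 3 * (B / (s - 2)) := by ring
  have h2 : (11 / 8) * s * (B / (s - 2)) + (33 / 64) * B ≤ 3 * (B / (s - 2)) + 2 * B := by
    rw [← sub_nonneg]
    have hexpand : 3 * (B / (s - 2)) + 2 * B - ((11 / 8) * s * (B / (s - 2)) + (33 / 64) * B)
        = (B / (s - 2)) * (3 + 2 * (s - 2) - (11 / 8) * s - (33 / 64) * (s - 2)) := by
      field_simp
      ring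
    rw [hexpand]
    apply mul_nonneg (by positivity)
    nlinarith
  rw [hrw]
  nlinarith [h1, h2]

theorem stmt7 (θ : ℝ) (hθ : 2 < θ) (a b : ℕ) (ha : 4 * θ ≤ (a : ℝ)) (hb : a < b) :
    ∑ t ∈ Finset.Icc a b, ((t : ℝ) + 1) ^ (1.5 * θ) / (t : ℝ) ^ 2 ≤
      (b : ℝ) ^ (1.5 * θ - 1) / (1.5 * θ - 1)
        + 3 * (b : ℝ) ^ (1.5 * θ - 2) / (1.5 * θ - 2)
        + 3 * (b : ℝ) ^ (1.5 * θ - 2) := by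
  set s : ℝ := 1.5 * θ with hs_def
  have hs : 3 < s := by rw [hs_def]; norm_num; linarith
  have ha' : (8 / 3) * s ≤ (a : ℝ) := by
    rw [hs_def]; nlinarith
  have ha1 : 1 ≤ a := by
    by_contra h
    push_neg at h
    interval_cases a <;> simp_all <;> nlinarith
  have hb0 : (0 : ℝ) < b := by
    have : 1 ≤ b := by omega
    exact_mod_cast this
  have hsb : s / (b : ℝ) ≤ 3 / 8 := by
    rw [div_le_iff₀ hb0]
    have : (a : ℝ) ≤ b := by exact_mod_cast hb.le
    nlinarith
  have step1 : ∑ t ∈ Finset.Icc a b, ((t : ℝ) + 1) ^ s / (t : ℝ) ^ 2 ≤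
      ∑ t ∈ Finset.Icc a b, ((t : ℝ) ^ (s - 2) + (11 / 8) * s * (t : ℝ) ^ (s - 3)) := by
    apply Finset.sum_le_sum
    intro t htm
    have : a ≤ t := (Finset.mem_Icc.1 htm).1
    exact aux_term_le s hs t (le_trans ha' (by exact_mod_cast this))
  have hsum2 := aux_sum_rpow_le (s - 2) (by linarith) a ha1 b hb.le
  have hsum3 := aux_sum_rpow_le (s - 3) (by linarith) a ha1 b hb.le
  have hs2 : s - 2 + 1 = s - 1 := by ring
  have hs3 : s - 3 + 1 = s - 2 := by ring
  rw [hs2] at hsum2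
  rw [hs3] at hsum3
  have step2 : ∑ t ∈ Finset.Icc a b, ((t : ℝ) ^ (s - 2) + (11 / 8) * s * (t : ℝ) ^ (s - 3)) ≤
      ((b : ℝ) ^ (s - 2) + (b : ℝ) ^ (s - 1) / (s - 1))
        + (11 / 8) * s * ((b : ℝ) ^ (s - 3) + (b : ℝ) ^ (s - 2) / (s - 2)) := by
    rw [Finset.sum_add_distrib, ← Finset.mul_sum]
    have h11 : (0 : ℝ) ≤ 11 / 8 * s := by linarith
    gcongr
  have e3 : (b : ℝ) ^ (s - 3) = (b : ℝ) ^ (s - 2) / b := by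
    rw [show s - 3 = s - 2 - 1 by ring, Real.rpow_sub_one hb0.ne']
  have hB : (0 : ℝ) < (b : ℝ) ^ (s - 2) := Real.rpow_pos_of_pos hb0 _
  have final : ((b : ℝ) ^ (s - 2) + (b : ℝ) ^ (s - 1) / (s - 1))
        + (11 / 8) * s * ((b : ℝ) ^ (s - 3) + (b : ℝ) ^ (s - 2) / (s - 2)) ≤
      (b : ℝ) ^ (s - 1) / (s - 1) + 3 * (b : ℝ) ^ (s - 2) / (s - 2)
        + 3 * (b : ℝ) ^ (s - 2) := by
    rw [e3]
    have hkey := aux_final s ((b : ℝ) ^ (s - 2)) (b : ℝ) hs hB hb0 hsb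
    linarith
  calc ∑ t ∈ Finset.Icc a b, ((t : ℝ) + 1) ^ s / (t : ℝ) ^ 2 ≤ _ := step1
    _ ≤ _ := step2
    _ ≤ _ := final
end

section
/- Consider the recursion V(k+1) ≤ ((3 + ρ²)/4)·V(k) + (θ²c/μ²)·(1/k²) for k ≥ K₁, where 0 ≤ ρ < 1, θ, c, μ > 0, and K₁ ≥ 16/(1 - ρ²). If V(K₁) ≤ V̂/K₁² with V̂ := max{K₁²·V(K₁), 8θ²c/(μ²(1-ρ²))}, then V(k) ≤ V̂/k² for all k ≥ K₁. -/
theorem stmt11 (V : ℕ → ℝ) (hVnn : ∀ k, 0 ≤ V k) (ρ θ c μ : ℝ)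
    (hρ0 : 0 ≤ ρ) (hρ1 : ρ < 1) (hθ : 0 < θ) (hc : 0 < c) (hμ : 0 < μ)
    (K₁ : ℕ) (hK₁ : 16 / (1 - ρ ^ 2) ≤ (K₁ : ℝ))
    (hrec : ∀ k ≥ K₁, V (k + 1) ≤ (3 + ρ ^ 2) / 4 * V k + θ ^ 2 * c / μ ^ 2 * (1 / (k : ℝ) ^ 2))
    (Vhat : ℝ) (hVhat : Vhat = max ((K₁ : ℝ) ^ 2 * V K₁) (8 * θ ^ 2 * c / (μ ^ 2 * (1 - ρ ^ 2))))
    (hinit : V K₁ ≤ Vhat / (K₁ : ℝ) ^ 2) :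
    ∀ k ≥ K₁, V k ≤ Vhat / (k : ℝ) ^ 2 := by
  have hρ2 : (0:ℝ) < 1 - ρ ^ 2 := by nlinarith
  have hK₁pos : (0:ℝ) < K₁ := lt_of_lt_of_le (by positivity) hK₁
  have hVhatnn : 0 ≤ Vhat := by
    rw [hVhat]; exact le_max_of_le_right (by positivity)
  have h1 : θ ^ 2 * c / μ ^ 2 ≤ (1 - ρ ^ 2) / 8 * Vhat := by
    have h : 8 * θ ^ 2 * c / (μ ^ 2 * (1 - ρ ^ 2)) ≤ Vhat := hVhat ▸ le_max_right _ _
    rw [div_le_iff₀ (by positivity)] at h ⊢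
    nlinarith [sq_nonneg μ]
  intro k hk
  induction k, hk using Nat.le_induction with
  | base => exact hinit
  | succ k hk ih =>
    have hkK : (K₁:ℝ) ≤ k := Nat.cast_le.mpr hk
    have hkpos : (0:ℝ) < k := lt_of_lt_of_le hK₁pos hkK
    have hk16 : 16 ≤ (1 - ρ ^ 2) * k := by
      rw [div_le_iff₀ hρ2] at hK₁
      nlinarith
    have h2 : 16 * ((k:ℝ) + 1) ≤ (1 - ρ ^ 2) * ((k:ℝ) + 1) ^ 2 := by nlinarith
    have hrec' := hrec k hk
    have hVk : V k ≤ Vhat / (k:ℝ) ^ 2 := ih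
    have key : (3 + ρ ^ 2) / 4 * (Vhat / (k:ℝ) ^ 2) + θ ^ 2 * c / μ ^ 2 * (1 / (k:ℝ) ^ 2)
        ≤ Vhat / ((k:ℝ) + 1) ^ 2 := by
      rw [show (3 + ρ ^ 2) / 4 * (Vhat / (k:ℝ) ^ 2) + θ ^ 2 * c / μ ^ 2 * (1 / (k:ℝ) ^ 2)
          = ((3 + ρ ^ 2) / 4 * Vhat + θ ^ 2 * c / μ ^ 2) / (k:ℝ) ^ 2 by ring,
        div_le_div_iff₀ (by positivity) (by positivity)]
      nlinarith [mul_nonneg (mul_nonneg hVhatnn hρ2.le) (sq_nonneg ((k:ℝ)+1)),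
        mul_le_mul_of_nonneg_right h1 (sq_nonneg ((k:ℝ)+1)),
        mul_le_mul_of_nonneg_left h2 hVhatnn, mul_pos hkpos hkpos]
    calc V (k + 1) ≤ (3 + ρ ^ 2) / 4 * V k + θ ^ 2 * c / μ ^ 2 * (1 / (k:ℝ) ^ 2) := hrec'
      _ ≤ (3 + ρ ^ 2) / 4 * (Vhat / (k:ℝ) ^ 2) + θ ^ 2 * c / μ ^ 2 * (1 / (k:ℝ) ^ 2) := by
          gcongr
      _ ≤ Vhat / ((k:ℝ) + 1) ^ 2 := key
      _ = Vhat / ((k + 1 : ℕ) : ℝ) ^ 2 := by push_cast; ring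
end

section
/- Suppose a real sequence y(k) satisfies y(k) ≥ (θρ^k/k^{2θ})·∑_{t=K}^{k-1} (t+1)^{2θ-1}/ρ^t for k > K, where θ > 2, K = ⌈2θ⌉, and ρ ∈ (0,1). Then for all k ≥ 4θ/(-ln ρ), the integral bound ∫_{K-1}^{k-1} (t+1)^{2θ-1}/ρ^t dt ≥ k^{2θ-1}/(2(-ln ρ)ρ^{k-1}) holds, and consequently y(k) ≥ θρ/(2(-ln ρ)k). -/
set_option maxHeartbeats 1000000

lemma aux_exp_chord (w : ℝ) (hw : 0 ≤ w) (hw6 : w ≤ 1/6) :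
    Real.exp (3*w - 1) ≤ 1/2 + w := by
  set E := Real.exp (1/2) with hEdef
  have hE : E * E = Real.exp 1 := by rw [hEdef, ← Real.exp_add]; norm_num
  have hEpos : 0 < E := Real.exp_pos _
  have he1 : (2.7182818283 : ℝ) < Real.exp 1 := Real.exp_one_gt_d9
  have he2 : Real.exp 1 < 2.7182818286 := Real.exp_one_lt_d9
  have hEub : E < 1.6488 := by nlinarith
  have hchord := convexOn_exp.2 (Set.mem_univ (0:ℝ)) (Set.mem_univ ((1:ℝ)/2))
    (show (0:ℝ) ≤ 1 - 6*w by linarith) (show (0:ℝ) ≤ 6*w by linarith)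
    (show (1 - 6*w) + 6*w = 1 by ring)
  simp only [smul_eq_mul, mul_zero, zero_add, Real.exp_zero, mul_one] at hchord
  have hchord' : Real.exp (3*w) ≤ (1 - 6*w) + 6*w * E := by
    have h36 : (6*w) * ((1:ℝ)/2) = 3*w := by ring
    rw [h36] at hchord
    exact hchord
  rw [show (3*w - 1) = 3*w + (-1) by ring, Real.exp_add, Real.exp_neg,
    ← div_eq_mul_inv, div_le_iff₀ (Real.exp_pos 1)]
  nlinarith [mul_le_mul_of_nonneg_left hEub.le hw]

theorem stmt15 (y : ℕ → ℝ) (θ ρ : ℝ) (hθ : 2 < θ) (hρ0 : 0 < ρ) (hρ1 : ρ < 1)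
    (K : ℕ) (hK : K = ⌈2 * θ⌉₊)
    (h : ∀ k > K,
      θ * ρ ^ k / (k : ℝ) ^ (2 * θ) *
          ∑ t ∈ Finset.Ico K k, ((t : ℝ) + 1) ^ (2 * θ - 1) / ρ ^ t ≤ y k) :
    ∀ k : ℕ, k > K → 4 * θ / (-Real.log ρ) ≤ (k : ℝ) →
      ((k : ℝ) ^ (2 * θ - 1) / (2 * (-Real.log ρ) * ρ ^ ((k : ℝ) - 1)) ≤
          ∫ t in ((K : ℝ) - 1)..((k : ℝ) - 1), (t + 1) ^ (2 * θ - 1) / ρ ^ t) ∧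
        θ * ρ / (2 * (-Real.log ρ) * (k : ℝ)) ≤ y k := by
  intro k hk hk4
  have hlog : Real.log ρ < 0 := Real.log_neg hρ0 hρ1
  set L : ℝ := -Real.log ρ with hLdef
  have hL : 0 < L := by rw [hLdef]; linarith
  have hθ0 : (0:ℝ) < θ := by linarith
  have hKl : 2*θ ≤ (K:ℝ) := by rw [hK]; exact Nat.le_ceil _
  have hKu : (K:ℝ) ≤ 2*θ + 1 := by
    rw [hK]; exact le_of_lt (Nat.ceil_lt_add_one (by positivity))
  have hkK : (K:ℝ) + 1 ≤ (k:ℝ) := by exact_mod_cast Nat.succ_le_of_lt hk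
  have hK4 : (4:ℝ) < (K:ℝ) := by linarith
  have hk0 : (0:ℝ) < (k:ℝ) := by linarith
  have hab : (K:ℝ) - 1 ≤ (k:ℝ) - 1 := by linarith
  have hLk : 4*θ ≤ L * (k:ℝ) := by
    rw [div_le_iff₀ hL] at hk4; linarith
  have hp0 : (0:ℝ) ≤ 2*θ - 1 := by linarith
  have hp1 : (0:ℝ) ≤ 2*θ - 2 := by linarith
  set f : ℝ → ℝ := fun t => (t+1)^(2*θ-1) * Real.exp (L*t) with hfdef
  set C : ℝ := (2*θ-1) * (k:ℝ)^(2*θ-2) / L with hCdef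
  set φ : ℝ → ℝ := fun t => ((t+1)^(2*θ-1) - C) * Real.exp (L*t) / L with hφdef
  set φ' : ℝ → ℝ := fun t =>
      (((2*θ-1) * (t+1)^(2*θ-2) + ((t+1)^(2*θ-1) - C) * L) * Real.exp (L*t)) / L with hφ'def
  -- derivative
  have hderiv : ∀ t ∈ Set.uIcc ((K:ℝ)-1) ((k:ℝ)-1), HasDerivAt φ (φ' t) t := by
    intro t ht
    rw [Set.uIcc_of_le hab] at ht
    have ht1 : (0:ℝ) < t + 1 := by have := ht.1; linarith
    have h1 : HasDerivAt (fun s : ℝ => s + 1) 1 t := (hasDerivAt_id t).add_const 1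
    have h2 : HasDerivAt (fun s : ℝ => (s+1)^(2*θ-1)) (1 * (2*θ-1) * (t+1)^(2*θ-2)) t := by
      have h2' := h1.rpow_const (p := 2*θ-1) (Or.inl (ne_of_gt ht1))
      rwa [show (2*θ-1-1) = 2*θ-2 by ring] at h2'
    have h3 : HasDerivAt (fun s : ℝ => Real.exp (L*s)) (Real.exp (L*t) * L) t := by
      simpa using ((hasDerivAt_id t).const_mul L).exp
    have h4 := ((h2.sub_const C).mul h3).div_const L
    simp only [hφdef, hφ'def]
    exact h4.congr_deriv (by ring)
  -- continuity
  have hcont1 : ContinuousOn (fun t : ℝ => (t+1)^(2*θ-1)) (Set.uIcc ((K:ℝ)-1) ((k:ℝ)-1)) :=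
    ContinuousOn.rpow_const (continuous_id.add continuous_const).continuousOn
      (fun x _ => Or.inr hp0)
  have hcont2 : ContinuousOn (fun t : ℝ => (t+1)^(2*θ-2)) (Set.uIcc ((K:ℝ)-1) ((k:ℝ)-1)) :=
    ContinuousOn.rpow_const (continuous_id.add continuous_const).continuousOn
      (fun x _ => Or.inr hp1)
  have hconte : ContinuousOn (fun t : ℝ => Real.exp (L*t)) (Set.uIcc ((K:ℝ)-1) ((k:ℝ)-1)) :=
    (Real.continuous_exp.comp (continuous_const.mul continuous_id)).continuousOn
  have hint_f : IntervalIntegrable f MeasureTheory.volume ((K:ℝ)-1) ((k:ℝ)-1) := by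
    apply ContinuousOn.intervalIntegrable
    simp only [hfdef]
    exact hcont1.mul hconte
  have hint_φ' : IntervalIntegrable φ' MeasureTheory.volume ((K:ℝ)-1) ((k:ℝ)-1) := by
    apply ContinuousOn.intervalIntegrable
    simp only [hφ'def]
    exact ((((continuousOn_const.mul hcont2).add
      ((hcont1.sub continuousOn_const).mul continuousOn_const)).mul hconte).div_const L)
  have hFTC : ∫ t in ((K:ℝ)-1)..((k:ℝ)-1), φ' t = φ ((k:ℝ)-1) - φ ((K:ℝ)-1) :=
    intervalIntegral.integral_eq_sub_of_hasDerivAt hderiv hint_φ'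
  have hmono : (∫ t in ((K:ℝ)-1)..((k:ℝ)-1), φ' t) ≤ ∫ t in ((K:ℝ)-1)..((k:ℝ)-1), f t := by
    apply intervalIntegral.integral_mono_on hab hint_φ' hint_f
    intro t ht
    have ht1 : (0:ℝ) < t + 1 := by have := ht.1; linarith
    have htk : t + 1 ≤ (k:ℝ) := by have := ht.2; linarith
    have hr : (t+1)^(2*θ-2) ≤ (k:ℝ)^(2*θ-2) := Real.rpow_le_rpow ht1.le htk hp1
    simp only [hφ'def, hfdef]
    rw [div_le_iff₀ hL]
    have hexp_pos : (0:ℝ) < Real.exp (L*t) := Real.exp_pos _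
    have hCL : C * L = (2*θ-1) * (k:ℝ)^(2*θ-2) := by
      rw [hCdef]; field_simp
    have key2 : ((2*θ-1) * (t+1)^(2*θ-2)) * Real.exp (L*t) ≤ C * L * Real.exp (L*t) := by
      rw [hCL]
      exact mul_le_mul_of_nonneg_right (mul_le_mul_of_nonneg_left hr (by linarith)) hexp_pos.le
    nlinarith [key2]
  -- key algebraic inequality
  have hP0 : (0:ℝ) < (k:ℝ)^(2*θ-1) := Real.rpow_pos_of_pos hk0 _
  have hm1 : (1:ℝ) ≤ (k:ℝ) - (K:ℝ) := by linarith
  have hkpow : (k:ℝ)^(2*θ-2) = (k:ℝ)^(2*θ-1) / (k:ℝ) := by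
    rw [show (2*θ-2) = (2*θ-1) - 1 by ring, Real.rpow_sub hk0, Real.rpow_one]
  have hC_eq : C = (2*θ-1) * (k:ℝ)^(2*θ-1) / (L * (k:ℝ)) := by
    rw [hCdef, hkpow]; ring
  have hC_le : C ≤ (2*θ-1) * (k:ℝ)^(2*θ-1) / (4*θ) := by
    rw [hC_eq]
    gcongr
  have hhalf : (k:ℝ)^(2*θ-1)/(4*θ) ≤ (k:ℝ)^(2*θ-1)/2 - C := by
    have hEq : (2*θ-1) * (k:ℝ)^(2*θ-1)/(4*θ) + (k:ℝ)^(2*θ-1)/(4*θ) = (k:ℝ)^(2*θ-1)/2 := by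
      rw [← add_div, show (2*θ-1)*(k:ℝ)^(2*θ-1) + (k:ℝ)^(2*θ-1) = (2*θ)*((k:ℝ)^(2*θ-1)*2/2) by ring,
        show (4:ℝ)*θ = (2*θ)*2 by ring, mul_div_mul_left _ _ (by positivity : (2*θ:ℝ) ≠ 0)]
      ring
    linarith
  have hs : 1/((K:ℝ)+1) ≤ ((k:ℝ) - (K:ℝ)) / (k:ℝ) := by
    rw [div_le_div_iff₀ (by linarith) hk0]
    nlinarith [mul_nonneg (show (0:ℝ) ≤ (K:ℝ) by linarith)
      (show (0:ℝ) ≤ (k:ℝ) - (K:ℝ) - 1 by linarith)]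
  -- (K/k)^p ≤ 1/2 + m/k
  have hKk : (K:ℝ)/(k:ℝ) = 1 - ((k:ℝ)-(K:ℝ))/(k:ℝ) := by field_simp; ring
  have h1s : (K:ℝ)/(k:ℝ) ≤ Real.exp (-(((k:ℝ)-(K:ℝ))/(k:ℝ))) := by
    rw [hKk]
    linarith [Real.add_one_le_exp (-(((k:ℝ)-(K:ℝ))/(k:ℝ)))]
  have h2s : ((K:ℝ)/(k:ℝ))^(2*θ-1) ≤ Real.exp (-(((k:ℝ)-(K:ℝ))/(k:ℝ)) * (2*θ-1)) := by
    rw [Real.exp_mul]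
    exact Real.rpow_le_rpow (by positivity) h1s hp0
  have h3s : Real.exp (-(((k:ℝ)-(K:ℝ))/(k:ℝ)) * (2*θ-1)) ≤
      Real.exp (-(1/((K:ℝ)+1)) * (2*θ-1)) := by
    apply Real.exp_le_exp.2
    nlinarith [hs, hp0]
  have h4s : Real.exp (-(1/((K:ℝ)+1)) * (2*θ-1)) ≤ 1/2 + 1/((K:ℝ)+1) := by
    have hw0 : (0:ℝ) < 1/(2*θ+2) := by positivity
    have hw6 : 1/(2*θ+2) ≤ 1/6 := by
      rw [div_le_div_iff₀ (by linarith) (by norm_num)]; linarith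
    have haux := aux_exp_chord (1/(2*θ+2)) hw0.le hw6
    have hww : 1/(2*θ+2) ≤ 1/((K:ℝ)+1) := by
      rw [div_le_div_iff₀ (by linarith) (by linarith)]; linarith
    have harg : -(1/((K:ℝ)+1)) * (2*θ-1) ≤ 3*(1/(2*θ+2)) - 1 := by
      rw [show 3*(1/(2*θ+2)) - 1 = -(1/(2*θ+2)) * (2*θ-1) by
        have hx : (1/(2*θ+2)) * (2*θ+2) = 1 := one_div_mul_cancel (by positivity)
        linear_combination hx]
      rw [neg_mul, neg_mul, neg_le_neg_iff]
      exact mul_le_mul_of_nonneg_right hww hp0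
    calc Real.exp (-(1/((K:ℝ)+1)) * (2*θ-1)) ≤ Real.exp (3*(1/(2*θ+2)) - 1) :=
          Real.exp_le_exp.2 harg
      _ ≤ 1/2 + 1/(2*θ+2) := haux
      _ ≤ 1/2 + 1/((K:ℝ)+1) := by linarith
  have hQP : (K:ℝ)^(2*θ-1) ≤ (1/2 + ((k:ℝ)-(K:ℝ))/(k:ℝ)) * (k:ℝ)^(2*θ-1) := by
    have e1 : (K:ℝ)^(2*θ-1) = ((K:ℝ)/(k:ℝ))^(2*θ-1) * (k:ℝ)^(2*θ-1) := by
      rw [Real.div_rpow (by linarith) hk0.le]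
      field_simp
    have hfinal : ((K:ℝ)/(k:ℝ))^(2*θ-1) ≤ 1/2 + ((k:ℝ)-(K:ℝ))/(k:ℝ) :=
      le_trans h2s (le_trans h3s (le_trans h4s (by linarith)))
    rw [e1]
    exact mul_le_mul_of_nonneg_right hfinal hP0.le
  have key : (K:ℝ)^(2*θ-1) - C ≤
      ((k:ℝ)^(2*θ-1)/2 - C) * Real.exp (L*((k:ℝ)-(K:ℝ))) := by
    have hA : 1 + L*((k:ℝ)-(K:ℝ)) ≤ Real.exp (L*((k:ℝ)-(K:ℝ))) := by
      linarith [Real.add_one_le_exp (L*((k:ℝ)-(K:ℝ)))]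
    have hLm0 : (0:ℝ) ≤ L*((k:ℝ)-(K:ℝ)) := by positivity
    have hB : (k:ℝ)^(2*θ-1)*((k:ℝ)-(K:ℝ))/(k:ℝ) ≤
        (k:ℝ)^(2*θ-1)/(4*θ) * (L*((k:ℝ)-(K:ℝ))) := by
      rw [show (k:ℝ)^(2*θ-1)/(4*θ) * (L*((k:ℝ)-(K:ℝ)))
          = (k:ℝ)^(2*θ-1)*(L*((k:ℝ)-(K:ℝ)))/(4*θ) by ring,
        div_le_div_iff₀ hk0 (by positivity)]
      nlinarith [mul_le_mul_of_nonneg_left hLk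
        (show (0:ℝ) ≤ (k:ℝ)^(2*θ-1)*((k:ℝ)-(K:ℝ)) by positivity)]
    have hC0 : (0:ℝ) ≤ (k:ℝ)^(2*θ-1)/2 - C := by
      have : (0:ℝ) < (k:ℝ)^(2*θ-1)/(4*θ) := by positivity
      linarith
    have step1 : (K:ℝ)^(2*θ-1) - C ≤
        (k:ℝ)^(2*θ-1)/2 - C + (k:ℝ)^(2*θ-1)/(4*θ) * (L*((k:ℝ)-(K:ℝ))) := by
      have : (1/2 + ((k:ℝ)-(K:ℝ))/(k:ℝ)) * (k:ℝ)^(2*θ-1)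
          = (k:ℝ)^(2*θ-1)/2 + (k:ℝ)^(2*θ-1)*((k:ℝ)-(K:ℝ))/(k:ℝ) := by ring
      linarith [hQP, hB]
    have step2 : (k:ℝ)^(2*θ-1)/2 - C + (k:ℝ)^(2*θ-1)/(4*θ) * (L*((k:ℝ)-(K:ℝ))) ≤
        ((k:ℝ)^(2*θ-1)/2 - C) * (1 + L*((k:ℝ)-(K:ℝ))) := by
      have := mul_le_mul_of_nonneg_right hhalf hLm0
      nlinarith [this]
    calc (K:ℝ)^(2*θ-1) - C ≤ _ := step1
      _ ≤ _ := step2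
      _ ≤ ((k:ℝ)^(2*θ-1)/2 - C) * Real.exp (L*((k:ℝ)-(K:ℝ))) :=
        mul_le_mul_of_nonneg_left hA hC0
  -- exponential bookkeeping
  have hEk : Real.exp (L*((K:ℝ)-1)) * Real.exp (L*((k:ℝ)-(K:ℝ))) = Real.exp (L*((k:ℝ)-1)) := by
    rw [← Real.exp_add]; congr 1; ring
  have hφdiff : (k:ℝ)^(2*θ-1)/2 * Real.exp (L*((k:ℝ)-1)) / L ≤ φ ((k:ℝ)-1) - φ ((K:ℝ)-1) := by
    have hkey2 : ((K:ℝ)^(2*θ-1) - C) * Real.exp (L*((K:ℝ)-1)) ≤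
        ((k:ℝ)^(2*θ-1)/2 - C) * Real.exp (L*((k:ℝ)-1)) := by
      rw [← hEk]
      have h' := mul_le_mul_of_nonneg_right key (Real.exp_pos (L*((K:ℝ)-1))).le
      calc ((K:ℝ)^(2*θ-1) - C) * Real.exp (L*((K:ℝ)-1)) ≤
          ((k:ℝ)^(2*θ-1)/2 - C) * Real.exp (L*((k:ℝ)-(K:ℝ))) * Real.exp (L*((K:ℝ)-1)) := h'
        _ = ((k:ℝ)^(2*θ-1)/2 - C) * (Real.exp (L*((K:ℝ)-1)) * Real.exp (L*((k:ℝ)-(K:ℝ)))) := by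
          ring
    simp only [hφdef]
    rw [show ((k:ℝ)-1) + 1 = (k:ℝ) by ring, show ((K:ℝ)-1) + 1 = (K:ℝ) by ring,
      div_sub_div_same]
    gcongr ?_ / L
    linarith [hkey2]
  have hρk : ρ^((k:ℝ)-1) = Real.exp (-(L*((k:ℝ)-1))) := by
    rw [Real.rpow_def_of_pos hρ0]; congr 1; rw [hLdef]; ring
  have hfeq : ∀ t : ℝ, (t+1)^(2*θ-1)/ρ^t = f t := by
    intro t
    simp only [hfdef]
    rw [Real.rpow_def_of_pos hρ0, show Real.log ρ * t = -(L*t) by rw [hLdef]; ring,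
      Real.exp_neg, div_eq_mul_inv, inv_inv]
  have hint_eq : (∫ t in ((K:ℝ)-1)..((k:ℝ)-1), (t+1)^(2*θ-1)/ρ^t)
      = ∫ t in ((K:ℝ)-1)..((k:ℝ)-1), f t := by
    apply intervalIntegral.integral_congr
    intro x _
    exact hfeq x
  have htarget : (k:ℝ)^(2*θ-1) / (2*L*ρ^((k:ℝ)-1))
      = (k:ℝ)^(2*θ-1)/2 * Real.exp (L*((k:ℝ)-1)) / L := by
    rw [hρk, Real.exp_neg]
    field_simp
  have part1 : (k:ℝ)^(2*θ-1) / (2*L*ρ^((k:ℝ)-1)) ≤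
      ∫ t in ((K:ℝ)-1)..((k:ℝ)-1), (t+1)^(2*θ-1)/ρ^t := by
    rw [htarget, hint_eq]
    calc _ ≤ φ ((k:ℝ)-1) - φ ((K:ℝ)-1) := hφdiff
      _ = ∫ t in ((K:ℝ)-1)..((k:ℝ)-1), φ' t := hFTC.symm
      _ ≤ _ := hmono
  refine ⟨part1, ?_⟩
  -- part 2
  have hcast : ((k - K : ℕ):ℝ) = (k:ℝ) - (K:ℝ) := by
    rw [Nat.cast_sub (le_of_lt hk)]
  have hmonof : MonotoneOn f (Set.Icc ((K:ℝ)-1) (((K:ℝ)-1) + ((k - K : ℕ):ℝ))) := by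
    intro a ha b hb hab'
    simp only [hfdef]
    have ha1 : (0:ℝ) ≤ a + 1 := by have := ha.1; linarith
    exact mul_le_mul (Real.rpow_le_rpow ha1 (by linarith) hp0)
      (Real.exp_le_exp.2 (mul_le_mul_of_nonneg_left hab' hL.le))
      (Real.exp_pos _).le (Real.rpow_nonneg (by linarith) _)
  have hIS := hmonof.integral_le_sum
  rw [hcast, show ((K:ℝ)-1) + ((k:ℝ)-(K:ℝ)) = (k:ℝ)-1 by ring] at hIS
  have hsum_eq : ∑ t ∈ Finset.Ico K k, ((t:ℝ)+1)^(2*θ-1)/ρ^t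
      = ∑ i ∈ Finset.range (k-K), f (((K:ℝ)-1) + ((i+1 : ℕ):ℝ)) := by
    rw [Finset.sum_Ico_eq_sum_range]
    apply Finset.sum_congr rfl
    intro i _
    rw [show (((K:ℝ)-1) + ((i+1 : ℕ):ℝ)) = ((K+i : ℕ):ℝ) by push_cast; ring,
      ← hfeq ((K+i:ℕ):ℝ), Real.rpow_natCast]
  have hcoef : (0:ℝ) ≤ θ * ρ^k / (k:ℝ)^(2*θ) := by positivity
  have hchain : (k:ℝ)^(2*θ-1)/2 * Real.exp (L*((k:ℝ)-1)) / L ≤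
      ∑ t ∈ Finset.Ico K k, ((t:ℝ)+1)^(2*θ-1)/ρ^t := by
    rw [hsum_eq]
    calc _ ≤ φ ((k:ℝ)-1) - φ ((K:ℝ)-1) := hφdiff
      _ = _ := hFTC.symm
      _ ≤ ∫ t in ((K:ℝ)-1)..((k:ℝ)-1), f t := hmono
      _ ≤ _ := hIS
  have hT : θ * ρ / (2*L*(k:ℝ)) = θ * ρ^k / (k:ℝ)^(2*θ) *
      ((k:ℝ)^(2*θ-1)/2 * Real.exp (L*((k:ℝ)-1)) / L) := by
    have hρk' : (ρ:ℝ)^k = Real.exp (Real.log ρ * (k:ℝ)) := by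
      rw [← Real.rpow_natCast ρ k, Real.rpow_def_of_pos hρ0]
    have hk2θ : (k:ℝ)^(2*θ) = (k:ℝ)^(2*θ-1) * (k:ℝ) := by
      rw [show (2*θ) = (2*θ-1) + 1 by ring, Real.rpow_add hk0, Real.rpow_one]
      norm_num
    have hρρ : Real.exp (Real.log ρ * (k:ℝ)) * Real.exp (L*((k:ℝ)-1)) = ρ := by
      rw [← Real.exp_add, show Real.log ρ * (k:ℝ) + L*((k:ℝ)-1) = Real.log ρ by
        rw [hLdef]; ring, Real.exp_log hρ0]
    calc θ * ρ / (2*L*(k:ℝ))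
        = θ * (Real.exp (Real.log ρ * (k:ℝ)) * Real.exp (L*((k:ℝ)-1))) / (2*L*(k:ℝ)) := by
          rw [hρρ]
      _ = θ * Real.exp (Real.log ρ * (k:ℝ)) / ((k:ℝ)^(2*θ-1) * (k:ℝ)) *
          ((k:ℝ)^(2*θ-1)/2 * Real.exp (L*((k:ℝ)-1)) / L) := by
          field_simp
      _ = θ * ρ^k / (k:ℝ)^(2*θ) * ((k:ℝ)^(2*θ-1)/2 * Real.exp (L*((k:ℝ)-1)) / L) := by
          rw [hρk', hk2θ]
  rw [hT]
  exact le_trans (mul_le_mul_of_nonneg_left hchain hcoef) (h k hk)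
end
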